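/- arXiv:2007.16024 — 6 statements merged into one kernel-verified Lean document; each statement's English description precedes it below -/
import Mathlib

section
/- Let $C \subseteq \mathbb{R}^n$ be a nonempty convex set and $\hat{x} \in C$. Then the relative interior of the tangent cone satisfies $\mathrm{rel\,int}\, T_C(\hat{x}) = \{d \in \mathbb{R}^n : \exists \alpha > 0 \text{ with } \hat{x} + \alpha d \in \mathrm{rel\,int}\, C\}$, where $T_C(\hat{x})$ is the closure of the cone of feasible directions of $C$ at $\hat{x}$. -/
open Set Topology Pointwise

section Aux

variable {E : Type*} [NormedAddCommGroup E] [NormedSpace ℝ E]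

/-- The interior of the closure of a convex set with nonempty interior equals its interior. -/
theorem myConvex.interior_closure {s : Set E} (hs : Convex ℝ s)
    (hne : (interior s).Nonempty) : interior (closure s) = interior s := by
  refine subset_antisymm ?_ (interior_mono subset_closure)
  obtain ⟨c, hc⟩ := hne
  intro z hz
  have hcont : Continuous fun t : ℝ => z + t • (z - c) :=
    continuous_const.add (continuous_id.smul continuous_const)
  have hmem : (fun t : ℝ => z + t • (z - c)) ⁻¹' interior (closure s) ∈ nhds (0 : ℝ) := by
    refine hcont.continuousAt.preimage_mem_nhds ?_
    simpa using isOpen_interior.mem_nhds hz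
  obtain ⟨ε, hε, hball⟩ := Metric.mem_nhds_iff.mp hmem
  set t : ℝ := ε / 2 with ht
  have htpos : 0 < t := by positivity
  have htmem : z + t • (z - c) ∈ closure s := by
    have : t ∈ Metric.ball (0 : ℝ) ε := by
      simp only [Metric.mem_ball, Real.dist_eq, sub_zero, ht,
        abs_of_pos (by positivity : (0:ℝ) < ε/2)]
      linarith
    exact interior_subset (hball this)
  have hsum : t / (1 + t) + 1 / (1 + t) = 1 := by field_simp; ring
  have key : (t / (1 + t)) • c + (1 / (1 + t)) • (z + t • (z - c)) = z := by
    match_scalars <;> field_simp <;> ring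
  rw [← key]
  exact hs.combo_interior_closure_mem_interior hc htmem (by positivity) (by positivity) hsum

/-- If the affine span of a set is everything, its intrinsic interior is its interior. -/
theorem myIntrinsicInterior_eq_interior {s : Set E} (h : affineSpan ℝ s = ⊤) :
    intrinsicInterior ℝ s = interior s := by
  refine subset_antisymm ?_ interior_subset_intrinsicInterior
  have hrange : Set.range ((↑) : affineSpan ℝ s → E) = Set.univ := by
    rw [Subtype.range_coe, h, AffineSubspace.top_coe]
  have hopen : IsOpenMap ((↑) : affineSpan ℝ s → E) := by
    have : IsOpenEmbedding ((↑) : affineSpan ℝ s → E) :=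
      ⟨IsEmbedding.subtypeVal, by rw [hrange]; exact isOpen_univ⟩
    exact this.isOpenMap
  rintro x hx
  have hsub : (Subtype.val '' interior (((↑) : affineSpan ℝ s → E) ⁻¹' s)) ⊆ s := by
    refine (image_mono interior_subset).trans ?_
    rintro y ⟨w, hw, rfl⟩; exact hw
  exact interior_maximal hsub (hopen _ isOpen_interior) hx

/-- Core full-dimensional lemma. -/
theorem myCore {C : Set E} (hconv : Convex ℝ C) (hint : (interior C).Nonempty) :
    interior (closure {d | ∃ y ∈ C, ∃ lam : ℝ, 0 ≤ lam ∧ d = lam • y}) =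
      {d | ∃ α : ℝ, 0 < α ∧ α • d ∈ interior C} := by
  set K : Set E := {d | ∃ y ∈ C, ∃ lam : ℝ, 0 ≤ lam ∧ d = lam • y} with hK
  have hCK : C ⊆ K := fun y hy => ⟨y, hy, 1, zero_le_one, (one_smul _ _).symm⟩
  have hKconv : Convex ℝ K := by
    rintro d₁ ⟨y₁, hy₁, l₁, hl₁, rfl⟩ d₂ ⟨y₂, hy₂, l₂, hl₂, rfl⟩ a b ha hb hab
    set μ : ℝ := a * l₁ + b * l₂ with hμ
    have hμ0 : 0 ≤ μ := by positivity
    rcases eq_or_lt_of_le hμ0 with hμz | hμpos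
    · have h1 : a * l₁ = 0 ∧ b * l₂ = 0 := by
        constructor <;> nlinarith [mul_nonneg ha hl₁, mul_nonneg hb hl₂]
      refine ⟨y₁, hy₁, 0, le_refl _, ?_⟩
      rw [smul_smul, smul_smul, h1.1, h1.2]; simp
    · refine ⟨(a * l₁ / μ) • y₁ + (b * l₂ / μ) • y₂,
        hconv hy₁ hy₂ (by positivity) (by positivity) (by field_simp; exact hμ.symm), μ, hμ0, ?_⟩
      rw [smul_add, smul_smul, smul_smul, smul_smul, smul_smul,
        mul_div_cancel₀ _ hμpos.ne', mul_div_cancel₀ _ hμpos.ne']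
  have hKint : (interior K).Nonempty := hint.mono (interior_mono hCK)
  rw [myConvex.interior_closure hKconv hKint]
  ext d
  constructor
  · intro hd
    obtain ⟨c, hc⟩ := hint
    have hcont : Continuous fun t : ℝ => d + t • (d - c) :=
      continuous_const.add (continuous_id.smul continuous_const)
    have hmem : (fun t : ℝ => d + t • (d - c)) ⁻¹' interior K ∈ nhds (0 : ℝ) := by
      refine hcont.continuousAt.preimage_mem_nhds ?_
      simpa using isOpen_interior.mem_nhds hd
    obtain ⟨δ, hδ, hball⟩ := Metric.mem_nhds_iff.mp hmem
    set ε : ℝ := δ / 2 with hε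
    have hεpos : 0 < ε := by positivity
    have hεK : d + ε • (d - c) ∈ K := by
      refine interior_subset (hball ?_)
      simp only [Metric.mem_ball, Real.dist_eq, sub_zero, hε,
        abs_of_pos (by positivity : (0:ℝ) < δ/2)]
      linarith
    obtain ⟨y, hy, lam, hlam, heq⟩ := hεK
    have hden : (0:ℝ) < ε + lam := by positivity
    refine ⟨(1 + ε) / (ε + lam), by positivity, ?_⟩
    have h2 : (1 + ε) • d = ε • c + lam • y := by rw [← heq]; module
    have h3 : ((1 + ε) / (ε + lam)) • d = (ε / (ε + lam)) • c + (lam / (ε + lam)) • y := by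
      have : ((1 + ε) / (ε + lam)) • d = (1 / (ε + lam)) • ((1 + ε) • d) := by
        rw [smul_smul]; ring_nf
      rw [this, h2]
      match_scalars <;> field_simp
    rw [h3]
    exact hconv.combo_interior_closure_mem_interior hc (subset_closure hy)
      (by positivity) (by positivity) (by field_simp)
  · rintro ⟨α, hα, hd⟩
    have h1 : α • d ∈ interior K := interior_mono hCK hd
    have h2 : d ∈ α⁻¹ • interior K := ⟨α • d, h1, by
      show α⁻¹ • α • d = d
      rw [smul_smul, inv_mul_cancel₀ hα.ne', one_smul]⟩
    rw [← interior_smul₀ (inv_ne_zero hα.ne')] at h2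
    refine interior_mono ?_ h2
    rintro - ⟨k, ⟨y, hy, l, hl, rfl⟩, rfl⟩
    exact ⟨y, hy, α⁻¹ * l, by positivity, by show α⁻¹ • l • y = _; rw [smul_smul]⟩

end Aux

/-- The tangent cone to a convex set `C` at `x`: the closure of the cone of
feasible directions. -/
def tangentConeConvex {n : ℕ} (C : Set (EuclideanSpace ℝ (Fin n)))
    (x : EuclideanSpace ℝ (Fin n)) : Set (EuclideanSpace ℝ (Fin n)) :=
  closure {d | ∃ y ∈ C, ∃ lam : ℝ, 0 ≤ lam ∧ d = lam • (y - x)}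

theorem relint_tangent_cone {n : ℕ}
    (C : Set (EuclideanSpace ℝ (Fin n))) (hCne : C.Nonempty) (hCconv : Convex ℝ C)
    (xh : EuclideanSpace ℝ (Fin n)) (hx : xh ∈ C) :
    intrinsicInterior ℝ (tangentConeConvex C xh) =
      {d | ∃ α : ℝ, 0 < α ∧ xh + α • d ∈ intrinsicInterior ℝ C} := by
  classical
  set C' : Set (EuclideanSpace ℝ (Fin n)) := (fun v => -xh + v) '' C with hC'def
  have h0 : (0 : EuclideanSpace ℝ (Fin n)) ∈ C' := ⟨xh, hx, by simp⟩
  have hC'conv : Convex ℝ C' := hCconv.translate (-xh)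
  set K : Set (EuclideanSpace ℝ (Fin n)) :=
    {d | ∃ y ∈ C', ∃ lam : ℝ, 0 ≤ lam ∧ d = lam • y} with hKdef
  have hKeq : tangentConeConvex C xh = closure K := by
    unfold tangentConeConvex
    have hsets : {d | ∃ y ∈ C, ∃ lam : ℝ, 0 ≤ lam ∧ d = lam • (y - xh)} = K := by
      ext d
      constructor
      · rintro ⟨y, hy, l, hl, rfl⟩
        exact ⟨-xh + y, ⟨y, hy, rfl⟩, l, hl, by simp [neg_add_eq_sub]⟩
      · rintro ⟨-, ⟨y, hy, rfl⟩, l, hl, rfl⟩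
        exact ⟨y, hy, l, hl, by simp [neg_add_eq_sub]⟩
    rw [hsets]
  have hriC' : intrinsicInterior ℝ C' = (fun v => -xh + v) '' intrinsicInterior ℝ C := by
    have h := (AffineIsometryEquiv.constVAdd ℝ (EuclideanSpace ℝ (Fin n))
      (-xh)).toAffineIsometry.image_intrinsicInterior C
    simpa [AffineIsometryEquiv.coe_toAffineIsometry, AffineIsometryEquiv.coe_constVAdd,
      vadd_eq_add, hC'def] using h
  have htrans : ∀ v : EuclideanSpace ℝ (Fin n),
      (xh + v ∈ intrinsicInterior ℝ C ↔ v ∈ intrinsicInterior ℝ C') := by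
    intro v
    rw [hriC']
    constructor
    · intro h
      exact ⟨xh + v, h, neg_add_cancel_left _ _⟩
    · rintro ⟨w, hw, hwe⟩
      have hwv : w = xh + v := by rw [← hwe, add_neg_cancel_left]
      rwa [hwv] at hw
  -- the span submodule
  set p : Submodule ℝ (EuclideanSpace ℝ (Fin n)) := Submodule.span ℝ C' with hpdef
  have hC'p : C' ⊆ (p : Set _) := Submodule.subset_span
  have hCK' : C' ⊆ K := fun y hy => ⟨y, hy, 1, zero_le_one, (one_smul _ _).symm⟩
  have hKp : K ⊆ (p : Set _) := by
    rintro - ⟨y, hy, l, hl, rfl⟩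
    exact p.smul_mem _ (hC'p hy)
  have hpclosed : IsClosed (p : Set (EuclideanSpace ℝ (Fin n))) := Submodule.closed_of_finiteDimensional p
  set C₀ : Set p := Subtype.val ⁻¹' C' with hC₀def
  set K₀ : Set p := Subtype.val ⁻¹' K with hK₀def
  have hC₀img : Subtype.val '' C₀ = C' := by
    rw [hC₀def, Set.image_preimage_eq_of_subset]
    rwa [Subtype.range_coe]
  have hK₀img : Subtype.val '' K₀ = K := by
    rw [hK₀def, Set.image_preimage_eq_of_subset]
    rwa [Subtype.range_coe]
  have hclos : closure K = Subtype.val '' closure K₀ := by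
    rw [← hK₀img]
    exact (hpclosed.isClosedEmbedding_subtypeVal).closure_image_eq K₀
  have himgri : ∀ A : Set p,
      intrinsicInterior ℝ (Subtype.val '' A) = Subtype.val '' intrinsicInterior ℝ A := by
    intro A
    have h := p.subtypeₗᵢ.toAffineIsometry.image_intrinsicInterior A
    simpa [LinearIsometry.coe_toAffineIsometry, Submodule.coe_subtypeₗᵢ,
      Submodule.coe_subtype] using h
  have h0₀ : (0 : p) ∈ C₀ := by
    show ((0 : p) : EuclideanSpace ℝ (Fin n)) ∈ C'
    simpa using h0
  have hspan₀ : Submodule.span ℝ C₀ = ⊤ := Submodule.span_span_coe_preimage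
  have hvs : vectorSpan ℝ C₀ = ⊤ := by
    rw [eq_top_iff, ← hspan₀]
    refine Submodule.span_le.2 ?_
    intro y hy
    simpa [vsub_eq_sub] using vsub_mem_vectorSpan ℝ hy h0₀
  have haff : affineSpan ℝ C₀ = ⊤ :=
    (AffineSubspace.affineSpan_eq_top_iff_vectorSpan_eq_top_of_nonempty ℝ p p ⟨0, h0₀⟩).2 hvs
  have hC₀K₀ : C₀ ⊆ K₀ := Set.preimage_mono hCK'
  have haffK : affineSpan ℝ (closure K₀) = ⊤ := by
    refine top_unique ?_
    rw [← haff]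
    exact affineSpan_mono ℝ (hC₀K₀.trans subset_closure)
  have hconvC₀ : Convex ℝ C₀ := hC'conv.linear_preimage p.subtype
  have hintC₀ : (interior C₀).Nonempty :=
    hconvC₀.interior_nonempty_iff_affineSpan_eq_top.2 haff
  have hK₀eq : K₀ = {d : p | ∃ y ∈ C₀, ∃ lam : ℝ, 0 ≤ lam ∧ d = lam • y} := by
    ext d
    constructor
    · rintro ⟨y, hy, l, hl, hd⟩
      refine ⟨⟨y, hC'p hy⟩, hy, l, hl, Subtype.ext ?_⟩
      simpa using hd
    · rintro ⟨y, hy, l, hl, rfl⟩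
      exact ⟨(y : EuclideanSpace ℝ (Fin n)), hy, l, hl, by simp⟩
  have hcore := myCore hconvC₀ hintC₀
  rw [← hK₀eq] at hcore
  have hriC'' : intrinsicInterior ℝ C' = Subtype.val '' interior C₀ := by
    rw [← hC₀img, himgri, myIntrinsicInterior_eq_interior haff]
  rw [hKeq, hclos, himgri, myIntrinsicInterior_eq_interior haffK, hcore]
  ext d
  simp only [Set.mem_image, Set.mem_setOf_eq]
  constructor
  · rintro ⟨e, ⟨α, hα, he⟩, rfl⟩
    refine ⟨α, hα, ?_⟩
    rw [htrans, hriC'']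
    exact ⟨α • e, he, by simp⟩
  · rintro ⟨α, hα, hmem⟩
    rw [htrans, hriC''] at hmem
    obtain ⟨w, hw, hwe⟩ := hmem
    refine ⟨α⁻¹ • w, ⟨α, hα, ?_⟩, ?_⟩
    · rw [smul_smul, mul_inv_cancel₀ hα.ne', one_smul]; exact hw
    · show α⁻¹ • (w : EuclideanSpace ℝ (Fin n)) = d
      rw [hwe, smul_smul, inv_mul_cancel₀ hα.ne', one_smul]
end

section
/- Let $g_i : \mathbb{R}^n \to \mathbb{R}$, $i=1,\dots,m$, be continuously differentiable with Lipschitz continuous gradients with common modulus $L$, let $x, d \in \mathbb{R}^n$, $\gamma \in (0, 1]$, and $\kappa \ge 0$ with $g_i(x) + \nabla g_i(x)^T d \le \kappa$ for all $i$. Then for every $i$, $g_i(x + \gamma d) \le (1 - \gamma)\max\{0, g_i(x)\} + \gamma\kappa + \frac{\gamma^2 L}{2}\|d\|^2$. -/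
theorem constraint_violation_step {n m : ℕ}
    (g : Fin m → EuclideanSpace ℝ (Fin n) → ℝ)
    (g' : Fin m → EuclideanSpace ℝ (Fin n) → EuclideanSpace ℝ (Fin n))
    (hdiff : ∀ i u, HasGradientAt (g i) (g' i u) u)
    (L : ℝ) (hL : 0 ≤ L)
    (hLip : ∀ i u v, ‖g' i u - g' i v‖ ≤ L * ‖u - v‖)
    (x d : EuclideanSpace ℝ (Fin n)) (γ : ℝ) (hγ : γ ∈ Set.Ioc (0:ℝ) 1)
    (κ : ℝ) (hκ : 0 ≤ κ)
    (hfeas : ∀ i, g i x + inner ℝ (g' i x) d ≤ κ) :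
    ∀ i, g i (x + γ • d) ≤ (1 - γ) * max 0 (g i x) + γ * κ + γ ^ 2 * L / 2 * ‖d‖ ^ 2 := by
  obtain ⟨hγ0, hγ1⟩ := hγ
  intro i
  set c : ℝ := inner ℝ (g' i x) d with hc
  -- the auxiliary function
  set ψ : ℝ → ℝ := fun t => g i (x + t • d) - t * c - L / 2 * t ^ 2 * ‖d‖ ^ 2 with hψ
  have hline : ∀ t : ℝ, HasDerivAt (fun s : ℝ => x + s • d) d t := by
    intro t
    simpa using ((hasDerivAt_id t).smul_const d).const_add x
  have hφ : ∀ t : ℝ, HasDerivAt (fun s : ℝ => g i (x + s • d))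
      (inner ℝ (g' i (x + t • d)) d) t := by
    intro t
    have h1 := (hdiff i (x + t • d)).hasFDerivAt
    have := h1.comp_hasDerivAt t (hline t)
    exact this
  have hψd : ∀ t : ℝ, HasDerivAt ψ
      (inner ℝ (g' i (x + t • d)) d - c - L / 2 * (2 * t) * ‖d‖ ^ 2) t := by
    intro t
    have h2 : HasDerivAt (fun s : ℝ => s * c) c t := by
      simpa using (hasDerivAt_id t).mul_const c
    have h3 : HasDerivAt (fun s : ℝ => L / 2 * s ^ 2 * ‖d‖ ^ 2) (L / 2 * (2 * t) * ‖d‖ ^ 2) t := by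
      have := ((hasDerivAt_pow 2 t).const_mul (L / 2)).mul_const (‖d‖ ^ 2)
      simpa [mul_comm, mul_assoc] using this
    exact ((hφ t).sub h2).sub h3
  have hanti : AntitoneOn ψ (Set.Icc 0 γ) := by
    apply antitoneOn_of_deriv_nonpos (convex_Icc 0 γ)
    · exact fun t _ => ((hψd t).continuousAt).continuousWithinAt
    · exact fun t _ => ((hψd t).differentiableAt).differentiableWithinAt
    · intro t ht
      rw [interior_Icc] at ht
      rw [(hψd t).deriv]
      have key : inner ℝ (g' i (x + t • d)) d - c ≤ L * t * ‖d‖ ^ 2 := by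
        have h4 : inner ℝ (g' i (x + t • d)) d - c = inner ℝ (g' i (x + t • d) - g' i x) d := by
          rw [hc, inner_sub_left]
        rw [h4]
        calc inner ℝ (g' i (x + t • d) - g' i x) d ≤ ‖g' i (x + t • d) - g' i x‖ * ‖d‖ :=
              real_inner_le_norm _ _
          _ ≤ L * ‖(x + t • d) - x‖ * ‖d‖ :=
              mul_le_mul_of_nonneg_right (hLip i _ _) (norm_nonneg d)
          _ = L * t * ‖d‖ ^ 2 := by
              rw [add_sub_cancel_left, norm_smul, Real.norm_eq_abs,
                abs_of_nonneg ht.1.le]; ring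
      nlinarith [sq_nonneg ‖d‖, ht.1.le]
  have hψle : ψ γ ≤ ψ 0 := hanti (Set.left_mem_Icc.2 hγ0.le)
    (Set.mem_Icc.2 ⟨hγ0.le, le_refl γ⟩) hγ0.le
  have hdesc : g i (x + γ • d) ≤ g i x + γ * c + L / 2 * γ ^ 2 * ‖d‖ ^ 2 := by
    simp only [hψ, zero_smul, add_zero, zero_mul, sub_zero, ne_eq, OfNat.ofNat_ne_zero,
      not_false_eq_true, zero_pow, mul_zero, zero_mul] at hψle
    linarith [hψle]
  have hmax : g i x ≤ max 0 (g i x) := le_max_right _ _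
  have hfi := hfeas i
  calc g i (x + γ • d) ≤ g i x + γ * c + L / 2 * γ ^ 2 * ‖d‖ ^ 2 := hdesc
    _ = (1 - γ) * g i x + γ * (g i x + c) + L / 2 * γ ^ 2 * ‖d‖ ^ 2 := by ring
    _ ≤ (1 - γ) * max 0 (g i x) + γ * κ + γ ^ 2 * L / 2 * ‖d‖ ^ 2 := by
        have h5 : (1 - γ) * g i x ≤ (1 - γ) * max 0 (g i x) :=
          mul_le_mul_of_nonneg_left hmax (by linarith)
        have h6 : γ * (g i x + c) ≤ γ * κ := mul_le_mul_of_nonneg_left hfi hγ0.le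
        have h7 : L / 2 * γ ^ 2 * ‖d‖ ^ 2 = γ ^ 2 * L / 2 * ‖d‖ ^ 2 := by ring
        linarith
end

section
/- Let $h : \mathbb{R}^n \to \mathbb{R}$ be continuously differentiable with $L$-Lipschitz gradient, $x, d \in \mathbb{R}^n$, $\gamma \in (0,1]$, and $\kappa \ge 0$ with $|h(x) + \nabla h(x)^T d| \le \kappa$. Then $|h(x + \gamma d)| \le (1 - \gamma)|h(x)| + \gamma\kappa + \frac{\gamma^2 L}{2}\|d\|^2$. -/
open InnerProductSpace Set

lemma comp_deriv {n : ℕ} (h : EuclideanSpace ℝ (Fin n) → ℝ)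
    (h' : EuclideanSpace ℝ (Fin n) → EuclideanSpace ℝ (Fin n))
    (hdiff : ∀ u, HasGradientAt h (h' u) u)
    (x d : EuclideanSpace ℝ (Fin n)) (t : ℝ) :
    HasDerivAt (fun t : ℝ => h (x + t • d)) (inner ℝ (h' (x + t • d)) d : ℝ) t := by
  have h1 : HasDerivAt (fun t : ℝ => x + t • d) d t := by
    simpa using ((hasDerivAt_id t).smul_const d).const_add x
  have := (hdiff (x + t • d)).hasFDerivAt.comp_hasDerivAt t h1
  simp at this
  exact this

lemma descent {n : ℕ} (h : EuclideanSpace ℝ (Fin n) → ℝ)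
    (h' : EuclideanSpace ℝ (Fin n) → EuclideanSpace ℝ (Fin n))
    (hdiff : ∀ u, HasGradientAt h (h' u) u)
    (L : ℝ)
    (hLip : ∀ u v, ‖h' u - h' v‖ ≤ L * ‖u - v‖)
    (x d : EuclideanSpace ℝ (Fin n)) (γ : ℝ) (hγ : 0 ≤ γ) :
    |h (x + γ • d) - h x - γ * inner ℝ (h' x) d| ≤ γ ^ 2 * L / 2 * ‖d‖ ^ 2 := by
  -- bound on derivative difference
  have key : ∀ t ∈ Icc (0:ℝ) γ,
      |(inner ℝ (h' (x + t • d)) d : ℝ) - inner ℝ (h' x) d| ≤ L * t * ‖d‖ ^ 2 := by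
    intro t ht
    have h1 : (inner ℝ (h' (x + t • d)) d : ℝ) - inner ℝ (h' x) d
        = inner ℝ (h' (x + t • d) - h' x) d := by rw [inner_sub_left]
    rw [h1]
    calc |(inner ℝ (h' (x + t • d) - h' x) d : ℝ)|
        ≤ ‖h' (x + t • d) - h' x‖ * ‖d‖ := abs_real_inner_le_norm _ _
      _ ≤ (L * ‖(x + t • d) - x‖) * ‖d‖ := by
          have := hLip (x + t • d) x
          nlinarith [norm_nonneg d, norm_nonneg (h' (x + t • d) - h' x)]
      _ = L * t * ‖d‖ ^ 2 := by
          rw [add_sub_cancel_left, norm_smul]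
          simp [abs_of_nonneg ht.1]
          ring
  -- upper bound via antitone function
  have upper : h (x + γ • d) - h x - γ * inner ℝ (h' x) d ≤ γ ^ 2 * L / 2 * ‖d‖ ^ 2 := by
    set ψ : ℝ → ℝ := fun t => h (x + t • d) - t * inner ℝ (h' x) d - L * t ^ 2 / 2 * ‖d‖ ^ 2 with hψ
    have hderiv : ∀ t : ℝ, HasDerivAt ψ
        ((inner ℝ (h' (x + t • d)) d : ℝ) - inner ℝ (h' x) d - L * t * ‖d‖ ^ 2) t := by
      intro t
      have h1 := comp_deriv h h' hdiff x d t
      have h2 : HasDerivAt (fun t : ℝ => t * inner ℝ (h' x) d) (inner ℝ (h' x) d) t := by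
        simpa using (hasDerivAt_id t).mul_const (inner ℝ (h' x) d : ℝ)
      have h3 : HasDerivAt (fun t : ℝ => L * t ^ 2 / 2 * ‖d‖ ^ 2) (L * t * ‖d‖ ^ 2) t := by
        have := ((hasDerivAt_pow 2 t).const_mul L).div_const 2
        have := this.mul_const (‖d‖ ^ 2)
        refine this.congr_deriv ?_
        ring
      exact (h1.sub h2).sub h3
    have hmono : AntitoneOn ψ (Icc 0 γ) := by
      apply antitoneOn_of_deriv_nonpos (convex_Icc 0 γ)
      · exact fun t ht => ((hderiv t).continuousAt).continuousWithinAt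
      · exact fun t ht => ((hderiv t).differentiableAt).differentiableWithinAt
      · intro t ht
        rw [interior_Icc] at ht
        rw [(hderiv t).deriv]
        have := key t ⟨le_of_lt ht.1, le_of_lt ht.2⟩
        have := abs_le.1 this
        linarith [this.2]
    have := hmono (left_mem_Icc.2 hγ) (right_mem_Icc.2 hγ) hγ
    simp only [hψ, zero_smul, add_zero, zero_mul, sub_zero, zero_pow, mul_zero,
      zero_div, ne_eq, OfNat.ofNat_ne_zero, not_false_eq_true] at this
    nlinarith [this]
  -- lower bound via monotone function
  have lower : -(γ ^ 2 * L / 2 * ‖d‖ ^ 2) ≤ h (x + γ • d) - h x - γ * inner ℝ (h' x) d := by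
    set φ : ℝ → ℝ := fun t => h (x + t • d) - t * inner ℝ (h' x) d + L * t ^ 2 / 2 * ‖d‖ ^ 2 with hφ
    have hderiv : ∀ t : ℝ, HasDerivAt φ
        ((inner ℝ (h' (x + t • d)) d : ℝ) - inner ℝ (h' x) d + L * t * ‖d‖ ^ 2) t := by
      intro t
      have h1 := comp_deriv h h' hdiff x d t
      have h2 : HasDerivAt (fun t : ℝ => t * inner ℝ (h' x) d) (inner ℝ (h' x) d) t := by
        simpa using (hasDerivAt_id t).mul_const (inner ℝ (h' x) d : ℝ)
      have h3 : HasDerivAt (fun t : ℝ => L * t ^ 2 / 2 * ‖d‖ ^ 2) (L * t * ‖d‖ ^ 2) t := by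
        have := (((hasDerivAt_pow 2 t).const_mul L).div_const 2).mul_const (‖d‖ ^ 2)
        refine this.congr_deriv ?_
        ring
      exact (h1.sub h2).add h3
    have hmono : MonotoneOn φ (Icc 0 γ) := by
      apply monotoneOn_of_deriv_nonneg (convex_Icc 0 γ)
      · exact fun t ht => ((hderiv t).continuousAt).continuousWithinAt
      · exact fun t ht => ((hderiv t).differentiableAt).differentiableWithinAt
      · intro t ht
        rw [interior_Icc] at ht
        rw [(hderiv t).deriv]
        have := abs_le.1 (key t ⟨le_of_lt ht.1, le_of_lt ht.2⟩)
        linarith [this.1]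
    have := hmono (left_mem_Icc.2 hγ) (right_mem_Icc.2 hγ) hγ
    simp only [hφ, zero_smul, add_zero, zero_mul, sub_zero, zero_pow, mul_zero,
      zero_div, ne_eq, OfNat.ofNat_ne_zero, not_false_eq_true] at this
    nlinarith [this]
  rw [abs_le]
  exact ⟨lower, upper⟩

theorem equality_violation_step {n : ℕ}
    (h : EuclideanSpace ℝ (Fin n) → ℝ)
    (h' : EuclideanSpace ℝ (Fin n) → EuclideanSpace ℝ (Fin n))
    (hdiff : ∀ u, HasGradientAt h (h' u) u)
    (L : ℝ) (hL : 0 ≤ L)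
    (hLip : ∀ u v, ‖h' u - h' v‖ ≤ L * ‖u - v‖)
    (x d : EuclideanSpace ℝ (Fin n)) (γ : ℝ) (hγ : γ ∈ Set.Ioc (0:ℝ) 1)
    (κ : ℝ) (hκ : 0 ≤ κ)
    (hfeas : |h x + inner ℝ (h' x) d| ≤ κ) :
    |h (x + γ • d)| ≤ (1 - γ) * |h x| + γ * κ + γ ^ 2 * L / 2 * ‖d‖ ^ 2 := by
  obtain ⟨hγ0, hγ1⟩ := hγ
  have hd := descent h h' hdiff L hLip x d γ hγ0.le
  have h1 : |h x + γ * inner ℝ (h' x) d| ≤ (1 - γ) * |h x| + γ * κ := by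
    have : h x + γ * (inner ℝ (h' x) d : ℝ)
        = (1 - γ) * h x + γ * (h x + inner ℝ (h' x) d) := by ring
    rw [this]
    calc |(1 - γ) * h x + γ * (h x + inner ℝ (h' x) d)|
        ≤ |(1 - γ) * h x| + |γ * (h x + (inner ℝ (h' x) d : ℝ))| := abs_add_le _ _
      _ = (1 - γ) * |h x| + γ * |h x + (inner ℝ (h' x) d : ℝ)| := by
          rw [abs_mul, abs_mul, abs_of_nonneg (by linarith : (0:ℝ) ≤ 1 - γ),
            abs_of_pos hγ0]
      _ ≤ (1 - γ) * |h x| + γ * κ := by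
          have : γ * |h x + (inner ℝ (h' x) d : ℝ)| ≤ γ * κ :=
            mul_le_mul_of_nonneg_left hfeas hγ0.le
          linarith
  calc |h (x + γ • d)|
      ≤ |h x + γ * inner ℝ (h' x) d| + |h (x + γ • d) - h x - γ * inner ℝ (h' x) d| := by
        have := abs_add_le (h x + γ * (inner ℝ (h' x) d : ℝ))
          (h (x + γ • d) - h x - γ * inner ℝ (h' x) d)
        simpa using this
    _ ≤ (1 - γ) * |h x| + γ * κ + γ ^ 2 * L / 2 * ‖d‖ ^ 2 := add_le_add h1 hd
end

section
/- Let $\{a^\nu\}$ be a nonnegative sequence and $\{\gamma^\nu\} \subset (0, 1]$ with $\gamma^\nu \to 0$, $\sum_\nu \gamma^\nu = \infty$. Suppose there exist constants $\mu > 0$ and $\alpha > 0$ such that $|a^{\nu+1} - a^\nu| \le \mu (\gamma^\nu a^\nu)^\alpha$ for all $\nu$, more generally $|a^{j} - a^{k}| \le \mu (\sum_{t=k}^{j-1} \gamma^t a^t)^\alpha$ for $j > k$, and that $\sum_\nu \gamma^\nu (a^\nu)^2 < \infty$ with $\liminf_\nu a^\nu = 0$. Then $\lim_{\nu \to \infty}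 a^\nu = 0$. -/
open Filter Topology

theorem holder_liminf_to_lim
    (a γ : ℕ → ℝ) (ha : ∀ ν, 0 ≤ a ν)
    (hγ : ∀ ν, γ ν ∈ Set.Ioc (0:ℝ) 1)
    (hγ0 : Tendsto γ atTop (𝓝 0))
    (hdiv : Tendsto (fun N => ∑ ν ∈ Finset.range N, γ ν) atTop atTop)
    (μ α : ℝ) (hμ : 0 < μ) (hα : 0 < α)
    (hHolder : ∀ j k, k < j → |a j - a k| ≤ μ * (∑ t ∈ Finset.Ico k j, γ t * a t) ^ α)
    (hsum : Summable fun ν => γ ν * a ν ^ 2)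
    (hliminf : Filter.liminf a atTop = 0) :
    Tendsto a atTop (𝓝 0) := by
  classical
  by_contra hnot
  -- there is δ > 0 with a ν ≥ δ frequently
  have hδex : ∃ δ > (0:ℝ), ∃ᶠ ν in atTop, δ ≤ a ν := by
    by_contra h
    push_neg at h
    apply hnot
    rw [tendsto_order]
    constructor
    · intro b hb
      exact Filter.Eventually.of_forall fun ν => lt_of_lt_of_le hb (ha ν)
    · intro b hb
      have h2 := h b hb
      exact h2
  obtain ⟨δ, hδpos, hδfreq⟩ := hδex
  -- a is frequently below δ/4 (else γ would be summable)
  have hsmall : ∀ N : ℕ, ∃ k, N ≤ k ∧ a k < δ / 4 := by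
    intro N
    by_contra h
    push_neg at h
    have hγsum : Summable γ := by
      rw [← summable_nat_add_iff N]
      apply Summable.of_nonneg_of_le (fun ν => (hγ _).1.le) (fun ν => ?_)
        (((summable_nat_add_iff N).mpr hsum).mul_left (16 / δ ^ 2))
      have hb : δ / 4 ≤ a (ν + N) := h _ (Nat.le_add_left N ν)
      have hg := (hγ (ν + N)).1
      have hA2 : δ ^ 2 / 16 ≤ a (ν + N) ^ 2 := by nlinarith
      have h1 : γ (ν + N) * (δ ^ 2 / 16) ≤ γ (ν + N) * a (ν + N) ^ 2 :=
        mul_le_mul_of_nonneg_left hA2 hg.le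
      calc γ (ν + N) = 16 / δ ^ 2 * (γ (ν + N) * (δ ^ 2 / 16)) := by
            field_simp
        _ ≤ 16 / δ ^ 2 * (γ (ν + N) * a (ν + N) ^ 2) := by
            apply mul_le_mul_of_nonneg_left h1 (by positivity)
    exact not_tendsto_atTop_of_tendsto_nhds hγsum.hasSum.tendsto_sum_nat hdiv
  -- constants
  set c : ℝ := (δ / (4 * μ)) ^ (α⁻¹) with hc_def
  have hc : 0 < c := Real.rpow_pos_of_pos (by positivity) _
  set E : ℝ := δ / 4 * (c / 2) with hE_def
  have hE : 0 < E := by positivity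
  -- tail of the summable series is small
  set f : ℕ → ℝ := fun t => γ t * a t ^ 2 with hf_def
  have hf0 : ∀ t, 0 ≤ f t := fun t => mul_nonneg (hγ t).1.le (sq_nonneg _)
  have hcs : CauchySeq fun n => ∑ t ∈ Finset.range n, f t :=
    hsum.hasSum.tendsto_sum_nat.cauchySeq
  rw [Metric.cauchySeq_iff'] at hcs
  obtain ⟨N₀, hN₀⟩ := hcs (E / 2) (by positivity)
  have htail : ∀ m n : ℕ, N₀ ≤ m → ∑ t ∈ Finset.Ico m n, f t < E := by
    intro m n hm
    rcases le_or_gt n m with hnm | hnm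
    · rw [Finset.Ico_eq_empty (not_lt.2 hnm), Finset.sum_empty]; exact hE
    · have h1 := hN₀ n (le_trans hm hnm.le)
      have h2 := hN₀ m hm
      rw [Real.dist_eq] at h1 h2
      have e : ∑ t ∈ Finset.Ico m n, f t =
          (∑ t ∈ Finset.range n, f t) - ∑ t ∈ Finset.range m, f t :=
        Finset.sum_Ico_eq_sub _ hnm.le
      rw [e]
      have := abs_lt.mp h1
      have := abs_lt.mp h2
      linarith
  -- γ eventually small
  obtain ⟨N₁, hN₁⟩ := Metric.tendsto_atTop.mp hγ0 (2 * c / δ) (by positivity)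
  -- pick k large with a k < δ/4
  obtain ⟨k, hk_ge, hk_small⟩ := hsmall (max N₀ N₁ + 1)
  have hkN₀ : N₀ ≤ k := le_trans (le_trans (le_max_left _ _) (Nat.le_succ _)) hk_ge
  have hkN₁ : N₁ ≤ k := le_trans (le_trans (le_max_right _ _) (Nat.le_succ _)) hk_ge
  -- pick minimal j > k with a j ≥ δ/2
  obtain ⟨j₀, hj₀ge, hj₀⟩ := Filter.frequently_atTop.mp hδfreq (k + 1)
  have hPex : ∃ j, k < j ∧ δ / 2 ≤ a j :=
    ⟨j₀, hj₀ge, le_trans (by linarith) hj₀⟩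
  set j : ℕ := Nat.find hPex with hj_def
  obtain ⟨hkj, haj⟩ := Nat.find_spec hPex
  have hjmin : ∀ t, k < t → t < j → a t < δ / 2 := by
    intro t hkt htj
    by_contra hcon
    exact Nat.find_min hPex htj ⟨hkt, le_of_not_gt hcon⟩
  -- greatest k' ∈ [k, j) with a k' < δ/4
  set P' : ℕ → Prop := fun m => k ≤ m ∧ a m < δ / 4 with hP'_def
  have hkj1 : k ≤ j - 1 := by omega
  have hP'k : P' k := ⟨le_refl k, hk_small⟩
  set k' : ℕ := Nat.findGreatest P' (j - 1) with hk'_def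
  have hk'spec : P' k' := Nat.findGreatest_spec hkj1 hP'k
  have hkk' : k ≤ k' := Nat.le_findGreatest hkj1 hP'k
  have hk'le : k' ≤ j - 1 := Nat.findGreatest_le _
  have hk'j : k' < j := by omega
  have hmid : ∀ t, k' < t → t < j → δ / 4 ≤ a t := by
    intro t hk't htj
    have h1 : ¬P' t := Nat.findGreatest_is_greatest hk't (Nat.le_pred_of_lt htj)
    rw [hP'_def] at h1
    by_contra hcon
    exact h1 ⟨le_trans hkk' hk't.le, lt_of_not_ge hcon⟩
  -- Hölder estimate on [k', j)
  set S : ℝ := ∑ t ∈ Finset.Ico k' j, γ t * a t with hS_def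
  have hSnn : 0 ≤ S :=
    Finset.sum_nonneg fun t _ => mul_nonneg (hγ t).1.le (ha t)
  have hH := hHolder j k' hk'j
  have hdiff : δ / 4 ≤ |a j - a k'| := by
    rw [abs_of_nonneg (by linarith [hk'spec.2])]
    linarith [hk'spec.2]
  have hμS : δ / 4 ≤ μ * S ^ α := le_trans hdiff hH
  have hSα : δ / (4 * μ) ≤ S ^ α := by
    rw [div_le_iff₀ (by positivity)]
    nlinarith
  have hcS : c ≤ S := by
    have h1 : (δ / (4 * μ)) ^ (α⁻¹) ≤ (S ^ α) ^ (α⁻¹) :=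
      Real.rpow_le_rpow (by positivity) hSα (by positivity)
    rwa [← Real.rpow_mul hSnn, mul_inv_cancel₀ hα.ne', Real.rpow_one] at h1
  -- first term is small
  have hγk' : γ k' * a k' < c / 2 := by
    have hd := hN₁ k' (le_trans hkN₁ hkk')
    rw [Real.dist_eq, sub_zero, abs_of_pos (hγ k').1] at hd
    have h1 : γ k' * a k' ≤ γ k' * (δ / 4) :=
      mul_le_mul_of_nonneg_left hk'spec.2.le (hγ k').1.le
    have h2 : γ k' * (δ / 4) < 2 * c / δ * (δ / 4) :=
      mul_lt_mul_of_pos_right hd (by positivity)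
    have h3 : 2 * c / δ * (δ / 4) = c / 2 := by field_simp; ring
    linarith
  -- split off first term
  set S2 : ℝ := ∑ t ∈ Finset.Ico (k' + 1) j, γ t * a t with hS2_def
  have hsplit : S = γ k' * a k' + S2 := Finset.sum_eq_sum_Ico_succ_bot hk'j _
  have hS2 : c / 2 < S2 := by linarith
  -- lower bound tail sum of f
  have hfsum : δ / 4 * S2 ≤ ∑ t ∈ Finset.Ico (k' + 1) j, f t := by
    rw [hS2_def, Finset.mul_sum]
    apply Finset.sum_le_sum
    intro t ht
    rw [Finset.mem_Ico] at ht
    have h1 : δ / 4 ≤ a t := hmid t (by omega) ht.2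
    have h2 : 0 ≤ γ t * a t := mul_nonneg (hγ t).1.le (ha t)
    have heq : f t = a t * (γ t * a t) := by simp only [hf_def]; ring
    rw [heq]
    exact mul_le_mul_of_nonneg_right h1 h2
  have hlt : ∑ t ∈ Finset.Ico (k' + 1) j, f t < E :=
    htail (k' + 1) j (by omega)
  have : E < δ / 4 * S2 := by
    rw [hE_def]
    exact mul_lt_mul_of_pos_left hS2 (by positivity)
  linarith
end

section
/- Let $g : \mathbb{R}^n \to \mathbb{R}^m$ and $h : \mathbb{R}^n \to \mathbb{R}^p$ be differentiable at $x$, let $d \in \mathbb{R}^n$, and let $\varphi(x) = \max_{i,j}\{\max\{0, g_i(x)\}, |h_j(x)|\}$. If $g_i(x) + \nabla g_i(x)^T d \le \kappa$ for all $i$ and $|h_j(x) + \nabla h_j(x)^T d| \le \kappa$ for all $j$, for some $\kappa \ge 0$, then $\varphi(x) - \kappa \le \max_{i,j}\{\|\nabla g_i(x)\|, \|\nabla h_j(x)\|\} \cdot \|d\|$. -/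
theorem infeasibility_bound {n m p : ℕ} (hm : 0 < m) (hp : 0 < p)
    (g : Fin m → EuclideanSpace ℝ (Fin n) → ℝ)
    (h : Fin p → EuclideanSpace ℝ (Fin n) → ℝ)
    (x d : EuclideanSpace ℝ (Fin n))
    (Gg : Fin m → EuclideanSpace ℝ (Fin n))
    (Gh : Fin p → EuclideanSpace ℝ (Fin n))
    (hg : ∀ i, HasGradientAt (g i) (Gg i) x)
    (hh : ∀ j, HasGradientAt (h j) (Gh j) x)
    (κ : ℝ) (hκ : 0 ≤ κ)
    (hgfeas : ∀ i, g i x + (inner ℝ (Gg i) d : ℝ) ≤ κ)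
    (hhfeas : ∀ j, |h j x + (inner ℝ (Gh j) d : ℝ)| ≤ κ) :
    max (⨆ i, max 0 (g i x)) (⨆ j, |h j x|) - κ ≤
      max (⨆ i, ‖Gg i‖) (⨆ j, ‖Gh j‖) * ‖d‖ := by
  haveI : Nonempty (Fin m) := ⟨⟨0, hm⟩⟩
  haveI : Nonempty (Fin p) := ⟨⟨0, hp⟩⟩
  set M := max (⨆ i, ‖Gg i‖) (⨆ j, ‖Gh j‖) with hM
  have hMg : ∀ i, ‖Gg i‖ ≤ M := fun i =>
    le_trans (le_ciSup (f := fun i => ‖Gg i‖) (Set.Finite.bddAbove (Set.finite_range _)) i) (le_max_left _ _)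
  have hMh : ∀ j, ‖Gh j‖ ≤ M := fun j =>
    le_trans (le_ciSup (f := fun j => ‖Gh j‖) (Set.Finite.bddAbove (Set.finite_range _)) j) (le_max_right _ _)
  have hd : 0 ≤ ‖d‖ := norm_nonneg _
  have hMd : 0 ≤ M * ‖d‖ := mul_nonneg (le_trans (norm_nonneg _) (hMg ⟨0, hm⟩)) hd
  rw [sub_le_iff_le_add]
  apply max_le
  · apply ciSup_le; intro i
    apply max_le (by linarith)
    have hb : |(inner ℝ (Gg i) d : ℝ)| ≤ M * ‖d‖ :=
      le_trans (abs_real_inner_le_norm _ _) (mul_le_mul_of_nonneg_right (hMg i) hd)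
    have := hgfeas i
    have := abs_le.1 hb
    linarith
  · apply ciSup_le; intro j
    have hb : |(inner ℝ (Gh j) d : ℝ)| ≤ M * ‖d‖ :=
      le_trans (abs_real_inner_le_norm _ _) (mul_le_mul_of_nonneg_right (hMh j) hd)
    have h1 := abs_le.1 (hhfeas j)
    have h2 := abs_le.1 hb
    rw [abs_le]; constructor <;> linarith
end

section
/- Let $K \subseteq \mathbb{R}^n$ be a closed convex set and $\beta > 0$ with $B = \{d : \|d\|_\infty \le \beta\}$. Define $C = \{(d, x) \in B \times K : d + x \in K\}$. Then the set-valued mapping $(d, x) \mapsto N_{B \cap (K - x)}(d)$ is outer semicontinuous on $C$ relative to $C$: if $(d^\nu, x^\nu) \to (\bar{d}, \bar{x})$ in $C$, $\eta^\nu \in N_{B \cap (K - x^\nu)}(d^\nu)$, and $\eta^\nu \to \bar{\eta}$, then $\bar{\eta} \in N_{B \cap (K - \bar{x})}(\bar{d})$. -/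
open Filter Topology

/-- The normal cone to a convex set `C` at `x`. -/
def normalCone {n : ℕ} (C : Set (EuclideanSpace ℝ (Fin n)))
    (x : EuclideanSpace ℝ (Fin n)) : Set (EuclideanSpace ℝ (Fin n)) :=
  {v | ∀ y ∈ C, (inner ℝ v (y - x) : ℝ) ≤ 0}

lemma coord_abs_le_norm {n : ℕ} (v : EuclideanSpace ℝ (Fin n)) (i : Fin n) :
    |v i| ≤ ‖v‖ := by
  rw [EuclideanSpace.norm_eq]
  have h1 : |v i| = Real.sqrt (‖v i‖ ^ 2) := by
    rw [Real.sqrt_sq_eq_abs, abs_norm, Real.norm_eq_abs]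
  rw [h1]
  apply Real.sqrt_le_sqrt
  exact Finset.single_le_sum (f := fun j => ‖v j‖ ^ 2)
    (fun j _ => by positivity) (Finset.mem_univ i)

theorem normal_cone_osc {n : ℕ}
    (K : Set (EuclideanSpace ℝ (Fin n))) (hKcl : IsClosed K) (hKconv : Convex ℝ K)
    (β : ℝ) (hβ : 0 < β)
    (B : Set (EuclideanSpace ℝ (Fin n))) (hB : B = {d | ∀ i, |d i| ≤ β})
    (d x : ℕ → EuclideanSpace ℝ (Fin n)) (db xb : EuclideanSpace ℝ (Fin n))
    (hmem : ∀ ν, d ν ∈ B ∧ x ν ∈ K ∧ d ν + x ν ∈ K)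
    (hmemb : db ∈ B ∧ xb ∈ K ∧ db + xb ∈ K)
    (hd : Tendsto d atTop (𝓝 db)) (hx : Tendsto x atTop (𝓝 xb))
    (η : ℕ → EuclideanSpace ℝ (Fin n)) (ηb : EuclideanSpace ℝ (Fin n))
    (hη : ∀ ν, η ν ∈ normalCone (B ∩ {u | x ν + u ∈ K}) (d ν))
    (hηconv : Tendsto η atTop (𝓝 ηb)) :
    ηb ∈ normalCone (B ∩ {u | xb + u ∈ K}) db := by
  intro y hy
  obtain ⟨hyB, hyK⟩ := hy
  have hyB' : ∀ i, |y i| ≤ β := by rwa [hB] at hyB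
  set ε : ℕ → ℝ := fun ν => ‖xb - x ν‖ with hε
  have hεnn : ∀ ν, 0 ≤ ε ν := fun ν => norm_nonneg _
  have hden : ∀ ν, 0 < β + ε ν := fun ν => by have := hεnn ν; linarith
  set lam : ℕ → ℝ := fun ν => β / (β + ε ν) with hlam
  have hlam0 : ∀ ν, 0 ≤ lam ν := fun ν => div_nonneg hβ.le (hden ν).le
  have hlam1 : ∀ ν, lam ν ≤ 1 := fun ν => by
    rw [div_le_one (hden ν)]; have := hεnn ν; linarith
  set u : ℕ → EuclideanSpace ℝ (Fin n) := fun ν => lam ν • (xb + y - x ν) with hu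
  have huB : ∀ ν, u ν ∈ B := by
    intro ν
    rw [hB]
    intro i
    have hcoord : u ν i = lam ν * (y i + (xb - x ν) i) := by
      simp only [hu, PiLp.smul_apply, PiLp.add_apply, PiLp.sub_apply, smul_eq_mul]
      ring
    rw [hcoord, abs_mul, abs_of_nonneg (hlam0 ν)]
    have h2 : |(xb - x ν) i| ≤ ε ν := coord_abs_le_norm _ i
    have h3 : |y i + (xb - x ν) i| ≤ β + ε ν :=
      (abs_add_le _ _).trans (add_le_add (hyB' i) h2)
    calc lam ν * |y i + (xb - x ν) i| ≤ lam ν * (β + ε ν) :=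
          mul_le_mul_of_nonneg_left h3 (hlam0 ν)
      _ = β := div_mul_cancel₀ β (hden ν).ne'
  have huK : ∀ ν, x ν + u ν ∈ K := by
    intro ν
    have heq : x ν + u ν = (1 - lam ν) • x ν + lam ν • (xb + y) := by
      simp only [hu]; module
    rw [heq]
    exact hKconv (hmem ν).2.1 hyK (by linarith [hlam1 ν]) (hlam0 ν) (by ring)
  have hεlim : Tendsto ε atTop (𝓝 0) := by
    have h0 : Tendsto (fun ν => xb - x ν) atTop (𝓝 (xb - xb)) :=
      tendsto_const_nhds.sub hx
    rw [sub_self] at h0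
    simpa [hε] using h0.norm
  have hlamlim : Tendsto lam atTop (𝓝 1) := by
    have : Tendsto (fun ν => β / (β + ε ν)) atTop (𝓝 (β / (β + 0))) :=
      tendsto_const_nhds.div (tendsto_const_nhds.add hεlim) (by simpa using hβ.ne')
    simpa [div_self hβ.ne'] using this
  have hulim : Tendsto u atTop (𝓝 y) := by
    have hxsum : Tendsto (fun ν => xb + y - x ν) atTop (𝓝 (xb + y - xb)) :=
      tendsto_const_nhds.sub hx
    have : Tendsto u atTop (𝓝 ((1 : ℝ) • (xb + y - xb))) := hlamlim.smul hxsum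
    simpa using this
  have hkey : ∀ ν, (inner ℝ (η ν) (u ν - d ν) : ℝ) ≤ 0 :=
    fun ν => hη ν (u ν) ⟨huB ν, huK ν⟩
  have hlim : Tendsto (fun ν => (inner ℝ (η ν) (u ν - d ν) : ℝ)) atTop
      (𝓝 (inner ℝ ηb (y - db) : ℝ)) :=
    hηconv.inner (hulim.sub hd)
  exact le_of_tendsto' hlim hkey
end
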